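/- If the interaction graph of a Boolean network f : {0,1}^n → {0,1}^n is acyclic, then its asynchronous graph is acyclic. -/

import Mathlib

/-- One asynchronous update step: replace coordinate `i` of `x` by `f x i`. -/
def updateStep {n : ℕ} (f : (Fin n → Bool) → (Fin n → Bool)) (x : Fin n → Bool)
    (i : Fin n) : Fin n → Bool :=
  Function.update x i (f x i)

/-- Action of a word on a state. -/
def applyWord {n : ℕ} (f : (Fin n → Bool) → (Fin n → Bool)) :
    List (Fin n) → (Fin n → Bool) → (Fin n → Bool)
  | [], x => x
  | i :: w, x => applyWord f w (updateStep f x i)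

/-- A word `w` fixes `f` if applying it to any state yields a fixed point of `f`. -/
def Fixes {n : ℕ} (f : (Fin n → Bool) → (Fin n → Bool)) (w : List (Fin n)) : Prop :=
  ∀ x, f (applyWord f w x) = applyWord f w x

/-- Arc of the asynchronous graph. -/
def AsyncArc {n : ℕ} (f : (Fin n → Bool) → (Fin n → Bool))
    (x y : Fin n → Bool) : Prop :=
  ∃ i : Fin n, f x i ≠ x i ∧ y = Function.update x i (f x i)

/-- `w` is induced by a path of the `n`-cube. -/
def IsPathWord (n : ℕ) (w : List (Fin n)) : Prop :=
  ∃ xs : List (Fin n → Bool), xs.Nodup ∧ xs.length = w.length + 1 ∧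
    ∀ k (hk : k < w.length),
      xs.getD (k + 1) default =
        Function.update (xs.getD k default) (w.get ⟨k, hk⟩)
          (!(xs.getD k default (w.get ⟨k, hk⟩)))

/-- `W` contains every `n`-path-word as a subword. -/
def PathUniversal (n : ℕ) (W : List (Fin n)) : Prop :=
  ∀ w : List (Fin n), IsPathWord n w → w.Sublist W

/-- `f_i` depends on coordinate `j` (arc `j → i` of the interaction graph). -/
def DependsOnCoord {n : ℕ} (f : (Fin n → Bool) → (Fin n → Bool)) (i j : Fin n) : Prop :=
  ∃ x : Fin n → Bool, f (Function.update x j (!(x j))) i ≠ f x i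

lemma hamming_dep {n : ℕ} (f : (Fin n → Bool) → (Fin n → Bool)) (i : Fin n) :
    ∀ c (x y : Fin n → Bool),
      (Finset.univ.filter fun j => x j ≠ y j).card ≤ c →
      f x i ≠ f y i → ∃ j, x j ≠ y j ∧ DependsOnCoord f i j := by
  classical
  intro c
  induction c with
  | zero =>
    intro x y hcard hne
    exfalso
    apply hne
    have : x = y := by
      funext j
      by_contra hj
      have : j ∈ Finset.univ.filter fun j => x j ≠ y j := by simp [hj]
      have := Finset.card_pos.mpr ⟨j, this⟩
      omega
    rw [this]
  | succ c ih =>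
    intro x y hcard hne
    have hxy : x ≠ y := fun h => hne (by rw [h])
    obtain ⟨j, hj⟩ : ∃ j, x j ≠ y j := by
      by_contra h
      push_neg at h
      exact hxy (funext h)
    have hyj : y j = !(x j) := by
      cases hx : x j <;> cases hy : y j <;> simp_all
    set x' := Function.update x j (!(x j)) with hx'
    by_cases h : f x' i = f x i
    · have hsub : (Finset.univ.filter fun j' => x' j' ≠ y j') ⊆
          (Finset.univ.filter fun j' => x j' ≠ y j').erase j := by
        intro j' hj'
        simp only [Finset.mem_filter, Finset.mem_univ, true_and] at hj'
        by_cases hjj : j' = j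
        · exfalso; apply hj'; rw [hjj, hx', Function.update_self, hyj]
        · simp only [Finset.mem_erase, Finset.mem_filter, Finset.mem_univ, true_and]
          refine ⟨hjj, ?_⟩
          rwa [hx', Function.update_of_ne hjj] at hj'
      have hmem : j ∈ Finset.univ.filter fun j' => x j' ≠ y j' := by simp [hj]
      have hcard' : (Finset.univ.filter fun j' => x' j' ≠ y j').card ≤ c := by
        have h1 := Finset.card_le_card hsub
        have h2 := Finset.card_erase_of_mem hmem
        omega
      obtain ⟨j', hj', hdep⟩ := ih x' y hcard' (by rw [h]; exact hne)
      have hjj : j' ≠ j := by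
        intro hEq
        apply hj'
        rw [hEq, hx', Function.update_self, hyj]
      refine ⟨j', ?_, hdep⟩
      rwa [hx', Function.update_of_ne hjj] at hj'
    · exact ⟨j, hj, ⟨x, fun hEq => h hEq⟩⟩

lemma flip_exists (g : ℕ → Bool) :
    ∀ d a, g a ≠ g (a + d) →
      ∃ k, a ≤ k ∧ k < a + d ∧ g k = g a ∧ g (k + 1) = !(g a) := by
  intro d
  induction d with
  | zero => intro a h; simp at h
  | succ d ih =>
    intro a h
    by_cases h1 : g (a + 1) = g a
    · have : g (a + 1) ≠ g (a + 1 + d) := by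
        rw [h1]
        have : a + 1 + d = a + (d + 1) := by omega
        rw [this]; exact h
      obtain ⟨k, hk1, hk2, hk3, hk4⟩ := ih (a + 1) this
      exact ⟨k, by omega, by omega, by rw [hk3, h1], by rw [hk4, h1]⟩
    · refine ⟨a, le_refl a, by omega, rfl, ?_⟩
      cases hx : g a <;> cases hy : g (a + 1) <;> simp_all

lemma extract_path {n : ℕ} {f : (Fin n → Bool) → (Fin n → Bool)}
    {x y : Fin n → Bool} (h : Relation.TransGen (AsyncArc f) x y) :
    ∃ (m : ℕ) (z : ℕ → (Fin n → Bool)), 1 ≤ m ∧ z 0 = x ∧ z m = y ∧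
      ∀ k < m, AsyncArc f (z k) (z (k + 1)) := by
  induction h with
  | @single b hb =>
    exact ⟨1, fun k => if k = 0 then x else b, le_refl 1, rfl, rfl, by
      intro k hk
      interval_cases k
      simpa using hb⟩
  | @tail b c h1 hbc ih =>
    obtain ⟨m, z, hm, hz0, hzm, hstep⟩ := ih
    refine ⟨m + 1, fun k => if k ≤ m then z k else c, by omega, by simp [hz0], by
      simp, ?_⟩
    intro k hk
    by_cases hkm : k < m
    · simp only [if_pos (by omega : k ≤ m), if_pos (by omega : k + 1 ≤ m)]
      exact hstep k hkm
    · have hkm' : k = m := by omega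
      subst hkm'
      simp only [if_pos (le_refl k), if_neg (by omega : ¬ k + 1 ≤ k), hzm]
      exact hbc

/-- if the interaction graph of `f` is acyclic, then the asynchronous
graph of `f` is acyclic. -/
theorem asyncGraph_acyclic_of_interactionGraph_acyclic (n : ℕ)
    (f : (Fin n → Bool) → (Fin n → Bool))
    (hG : ∀ i : Fin n, ¬ Relation.TransGen (fun j i => DependsOnCoord f i j) i i) :
    ∀ x : Fin n → Bool, ¬ Relation.TransGen (AsyncArc f) x x := by
  classical
  intro x hx
  obtain ⟨m, z, hm, hz0, hzm, hstep⟩ := extract_path hx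
  set S : Set (Fin n) := {j | ∃ a, a ≤ m ∧ ∃ b, b ≤ m ∧ z a j ≠ z b j} with hS
  -- a flipped coordinate is updated to its f-value
  have hflip : ∀ k (i : Fin n), k < m → z (k + 1) i ≠ z k i → f (z k) i = z (k + 1) i := by
    intro k i hk hne
    obtain ⟨c, hc1, hc2⟩ := hstep k hk
    by_cases hci : c = i
    · subst hci
      rw [hc2, Function.update_self]
    · exfalso
      apply hne
      rw [hc2, Function.update_of_ne (fun h => hci h.symm)]
  have hz0m : z m = z 0 := by rw [hz0, hzm]
  have key : ∀ i ∈ S, ∃ j ∈ S, DependsOnCoord f i j := by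
    intro i hi
    obtain ⟨a, ha, b, hb, hab⟩ := hi
    have hwlog : ∃ a ≤ m, z a i ≠ z 0 i := by
      by_cases h0 : z a i = z 0 i
      · exact ⟨b, hb, fun h => hab (by rw [h0, h])⟩
      · exact ⟨a, ha, h0⟩
    obtain ⟨a, ha, hai⟩ := hwlog
    have hzai : z a i = !(z 0 i) := by
      cases h0 : z 0 i <;> cases h1 : z a i <;> simp_all
    -- upward flip on [0, a)
    obtain ⟨k, hk0, hka, hgk, hgk1⟩ :=
      flip_exists (fun t => z t i) a 0 (by simpa using fun h => hai h.symm)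
    -- downward flip on [a, m)
    obtain ⟨l, hla, hlm, hgl, hgl1⟩ :=
      flip_exists (fun t => z t i) (m - a) a (by
        show z a i ≠ z (a + (m - a)) i
        have : a + (m - a) = m := by omega
        rw [this, hz0m, hzai]
        cases z 0 i <;> simp)
    have hkm : k < m := by omega
    have hlm' : l < m := by omega
    have h1 : f (z k) i = !(z 0 i) := by
      rw [hflip k i hkm (by rw [hgk1, hgk, hz0]; cases z 0 i <;> simp), hgk1, hz0]
    have h2 : f (z l) i = z 0 i := by
      have : f (z l) i = z (l + 1) i := by
        apply hflip l i hlm'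
        rw [hgl1, hgl]
        cases z a i <;> simp
      rw [this, hgl1, hzai]
      cases z 0 i <;> simp
    have hne : f (z k) i ≠ f (z l) i := by
      rw [h1, h2]
      cases z 0 i <;> simp
    obtain ⟨j, hj, hdep⟩ := hamming_dep f i
      ((Finset.univ.filter fun j => z k j ≠ z l j).card) (z k) (z l) (le_refl _) hne
    exact ⟨j, ⟨k, le_of_lt hkm, l, le_of_lt hlm', hj⟩, hdep⟩
  -- S is nonempty
  have hSne : S.Nonempty := by
    obtain ⟨c, hc1, hc2⟩ := hstep 0 hm
    refine ⟨c, 0, Nat.zero_le m, 1, hm, ?_⟩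
    rw [hc2, Function.update_self]
    exact fun h => hc1 h.symm
  -- build the successor function on the subtype
  have hT : ∀ t : {j // j ∈ S}, ∃ s : {j // j ∈ S}, DependsOnCoord f t.1 s.1 := by
    intro t
    obtain ⟨j, hj, hd⟩ := key t.1 t.2
    exact ⟨⟨j, hj⟩, hd⟩
  choose g hg using hT
  have chain : ∀ d (t : {j // j ∈ S}),
      Relation.TransGen (fun j i => DependsOnCoord f i j) (g^[d + 1] t).1 t.1 := by
    intro d
    induction d with
    | zero =>
      intro t
      simp only [zero_add, Function.iterate_one]
      exact Relation.TransGen.single (hg t)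
    | succ d ih =>
      intro t
      have h1 := ih (g t)
      rw [← Function.iterate_succ_apply] at h1
      exact Relation.TransGen.tail h1 (hg t)
  obtain ⟨c, hc⟩ := hSne
  obtain ⟨a, b, hab, heq⟩ :=
    Finite.exists_ne_map_eq_of_infinite (fun k : ℕ => g^[k] (⟨c, hc⟩ : {j // j ∈ S}))
  rcases Ne.lt_or_gt hab with hlt | hlt
  · obtain ⟨d, hdd⟩ : ∃ d, b = (d + 1) + a := ⟨b - a - 1, by omega⟩
    have := chain d (g^[a] ⟨c, hc⟩)
    rw [← Function.iterate_add_apply, ← hdd, heq] at this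
    exact hG _ this
  · obtain ⟨d, hdd⟩ : ∃ d, a = (d + 1) + b := ⟨a - b - 1, by omega⟩
    have := chain d (g^[b] ⟨c, hc⟩)
    rw [← Function.iterate_add_apply, ← hdd, ← heq] at this
    exact hG _ this
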